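/- Let K be a commutative ring with identity, let n ≥ 1 and m ≥ 2, let h = 1 + Σ_{i=n}^∞ a_i x^i ∈ H(K) and g = x + Σ_{j=m}^∞ b_j x^j ∈ N(K). Then the product (h∘g)·h^{-1} (computed in H(K)) lies in H^{m+n−1}(K), i.e. its coefficients in all degrees 1, …, m+n−2 vanish, and its coefficient of x^{m+n−1} equals n·a_n·b_m. -/

import Mathlib

open PowerSeries Finset

namespace RiordanPaper

variable {K : Type*} [CommRing K]

noncomputable def comp (f g : PowerSeries K) : PowerSeries K :=
  PowerSeries.mk fun n => ∑ d ∈ Finset.range (n + 1), coeff d f * coeff n (g ^ d)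

lemma coeff_comp (f g : PowerSeries K) (n : ℕ) :
    coeff n (comp f g) = ∑ d ∈ Finset.range (n + 1), coeff d f * coeff n (g ^ d) := by
  simp [comp]

lemma coeff_pow_eq_zero {g : PowerSeries K} (hg : constantCoeff g = 0) {n d : ℕ}
    (h : n < d) : coeff n (g ^ d) = 0 := by
  have hdvd : (X : PowerSeries K) ^ d ∣ g ^ d :=
    pow_dvd_pow_of_dvd (PowerSeries.X_dvd_iff.2 hg) d
  exact (PowerSeries.X_pow_dvd_iff.1 hdvd) n h

lemma coeff_comp_of_lt {g : PowerSeries K} (hg : constantCoeff g = 0)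
    (f : PowerSeries K) {n N : ℕ} (hn : n < N) :
    coeff n (comp f g) = ∑ d ∈ Finset.range N, coeff d f * coeff n (g ^ d) := by
  rw [coeff_comp]
  apply Finset.sum_subset
  · intro d hd
    simp only [Finset.mem_range] at hd ⊢
    omega
  · intro d _ hd'
    simp only [Finset.mem_range] at hd'
    rw [coeff_pow_eq_zero hg (by omega), mul_zero]

lemma coeff_eval₂ {g : PowerSeries K} (hg : constantCoeff g = 0)
    (P : Polynomial K) (n : ℕ) :
    coeff n (Polynomial.eval₂ C g P)
      = ∑ d ∈ Finset.range (n + 1), P.coeff d * coeff n (g ^ d) := by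
  classical
  have h1 : P.natDegree < max (n + 1) (P.natDegree + 1) :=
    lt_of_lt_of_le (Nat.lt_succ_self _) (le_max_right _ _)
  rw [Polynomial.eval₂_eq_sum_range' C h1 g, map_sum]
  have h2 : ∀ d ∈ Finset.range (max (n + 1) (P.natDegree + 1)),
      coeff n (C (P.coeff d) * g ^ d) = P.coeff d * coeff n (g ^ d) := fun d _ => by
    rw [coeff_C_mul]
  rw [Finset.sum_congr rfl h2]
  symm
  apply Finset.sum_subset
  · intro d hd
    simp only [Finset.mem_range] at hd ⊢
    omega
  · intro d _ hd'
    simp only [Finset.mem_range] at hd'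
    rw [coeff_pow_eq_zero hg (by omega), mul_zero]

lemma coeff_comp_eq_eval₂_trunc {g : PowerSeries K} (hg : constantCoeff g = 0)
    (f : PowerSeries K) {n N : ℕ} (hn : n < N) :
    coeff n (comp f g) = coeff n (Polynomial.eval₂ C g (trunc N f)) := by
  rw [coeff_eval₂ hg, coeff_comp]
  apply Finset.sum_congr rfl
  intro d hd
  simp only [Finset.mem_range] at hd
  rw [PowerSeries.coeff_trunc, if_pos (by omega)]

lemma mul_comp {g : PowerSeries K} (hg : constantCoeff g = 0) (f₁ f₂ : PowerSeries K) :
    comp (f₁ * f₂) g = comp f₁ g * comp f₂ g := by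
  ext n
  have key : coeff n (comp (f₁ * f₂) g)
      = coeff n (Polynomial.eval₂ C g (trunc (n + 1) f₁ * trunc (n + 1) f₂)) := by
    rw [coeff_eval₂ hg, coeff_comp]
    apply Finset.sum_congr rfl
    intro d hd
    simp only [Finset.mem_range] at hd
    congr 1
    rw [Polynomial.coeff_mul, PowerSeries.coeff_mul]
    apply Finset.sum_congr rfl
    intro ab hab
    rw [Finset.HasAntidiagonal.mem_antidiagonal] at hab
    rw [PowerSeries.coeff_trunc, PowerSeries.coeff_trunc, if_pos (by omega), if_pos (by omega)]
  rw [key, Polynomial.eval₂_mul, PowerSeries.coeff_mul, PowerSeries.coeff_mul]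
  apply Finset.sum_congr rfl
  intro ab hab
  rw [Finset.HasAntidiagonal.mem_antidiagonal] at hab
  rw [← coeff_comp_eq_eval₂_trunc hg f₁ (show ab.1 < n + 1 by omega),
    ← coeff_comp_eq_eval₂_trunc hg f₂ (show ab.2 < n + 1 by omega)]

lemma one_comp (g : PowerSeries K) : comp (1 : PowerSeries K) g = 1 := by
  ext n
  rw [coeff_comp, Finset.sum_eq_single 0]
  · simp
  · intro d _ hd0
    simp [PowerSeries.coeff_one, hd0]
  · intro h
    simp at h

lemma comp_X (f : PowerSeries K) : comp f X = f := by
  ext n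
  rw [coeff_comp, Finset.sum_eq_single n]
  · rw [coeff_X_pow, if_pos rfl, mul_one]
  · intro d _ hdn
    rw [coeff_X_pow, if_neg (fun h => hdn h.symm), mul_zero]
  · intro h
    simp at h

lemma X_comp {g : PowerSeries K} (hg : constantCoeff g = 0) : comp X g = g := by
  ext n
  rcases Nat.eq_zero_or_pos n with hn | hn
  · subst hn
    rw [coeff_comp]
    simp [PowerSeries.coeff_X, coeff_zero_eq_constantCoeff_apply, hg]
  · rw [coeff_comp, Finset.sum_eq_single 1]
    · rw [coeff_one_X, pow_one, one_mul]
    · intro d _ hd1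
      rw [PowerSeries.coeff_X, if_neg hd1, zero_mul]
    · intro h
      simp only [Finset.mem_range] at h
      omega

lemma constantCoeff_comp (f g : PowerSeries K) :
    constantCoeff (comp f g) = constantCoeff f := by
  rw [← coeff_zero_eq_constantCoeff_apply, coeff_comp]
  simp

lemma coeff_one_comp (f g : PowerSeries K) :
    coeff 1 (comp f g) = coeff 1 f * coeff 1 g := by
  rw [coeff_comp]
  have : Finset.range 2 = {0, 1} := rfl
  rw [this, Finset.sum_insert (by simp), Finset.sum_singleton, pow_zero, pow_one]
  simp [PowerSeries.coeff_one]

lemma comp_assoc {g k : PowerSeries K} (hg : constantCoeff g = 0)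
    (hk : constantCoeff k = 0) (f : PowerSeries K) :
    comp (comp f g) k = comp f (comp g k) := by
  have hpow : ∀ e : ℕ, (comp g k) ^ e = comp (g ^ e) k := by
    intro e
    induction e with
    | zero => simp [one_comp]
    | succ m ih => rw [pow_succ, pow_succ, ih, mul_comp hk]
  ext n
  rw [coeff_comp, coeff_comp]
  have L1 : ∀ d ∈ Finset.range (n + 1), coeff d (comp f g) * coeff n (k ^ d)
      = ∑ e ∈ Finset.range (n + 1), coeff e f * coeff d (g ^ e) * coeff n (k ^ d) := by
    intro d hd
    simp only [Finset.mem_range] at hd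
    rw [coeff_comp_of_lt hg f hd, Finset.sum_mul]
  rw [Finset.sum_congr rfl L1, Finset.sum_comm]
  apply Finset.sum_congr rfl
  intro e _
  rw [hpow e, coeff_comp, Finset.mul_sum]
  apply Finset.sum_congr rfl
  intro d _
  ring


lemma gpow_coeff (m : ℕ) (hm : 2 ≤ m) (g : PowerSeries K)
    (hg0 : constantCoeff g = 0) (hg1 : coeff 1 g = 1)
    (hgm : ∀ j, 1 < j → j < m → coeff j g = 0)
    (d k : ℕ) (hk : k < d + m) :
    coeff k (g ^ d) = (if k = d then 1 else 0)
      + (if k + 1 = d + m then (d : K) * coeff m g else 0) := by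
  induction d generalizing k with
  | zero =>
    rw [pow_zero, PowerSeries.coeff_one]
    simp only [Nat.cast_zero, zero_mul, ite_self, add_zero]
  | succ d ih =>
    rcases Nat.eq_zero_or_pos k with rfl | hkpos
    · rw [coeff_zero_eq_constantCoeff_apply, map_pow, hg0, zero_pow (Nat.succ_ne_zero d)]
      rw [if_neg (show ¬(0 = d + 1) by omega), if_neg (show ¬(0 + 1 = d + 1 + m) by omega),
        add_zero]
    rw [pow_succ', PowerSeries.coeff_mul]
    by_cases hkm : k = d + m
    · -- two surviving terms: (1, k-1) and (m, d)
      rw [Finset.sum_eq_add_of_mem (1, k - 1) (m, d)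
        (by rw [Finset.HasAntidiagonal.mem_antidiagonal]; simp; omega)
        (by rw [Finset.HasAntidiagonal.mem_antidiagonal]; simp; omega)
        (by intro h; exact absurd (congrArg Prod.fst h) (by simp; omega))
        ?_]
      · have h1 : coeff (k - 1) (g ^ d)
            = (if k - 1 = d then 1 else 0)
              + (if k - 1 + 1 = d + m then (d : K) * coeff m g else 0) :=
          ih (k - 1) (by omega)
        have h2 : coeff d (g ^ d)
            = (if d = d then 1 else 0)
              + (if d + 1 = d + m then (d : K) * coeff m g else 0) :=
          ih d (by omega)
        rw [hg1, one_mul, h1, h2]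
        rw [if_neg (show ¬(k - 1 = d) by omega), if_pos (show k - 1 + 1 = d + m by omega),
          if_pos (show d = d from rfl), if_neg (show ¬(d + 1 = d + m) by omega),
          if_neg (show ¬(k = d + 1) by omega), if_pos (show k + 1 = d + 1 + m by omega)]
        push_cast
        ring
      · rintro ⟨i, j⟩ hij ⟨hne1, hne2⟩
        rw [Finset.HasAntidiagonal.mem_antidiagonal] at hij
        simp only at hij ⊢
        rcases Nat.lt_or_ge i m with him | him
        · rcases Nat.eq_zero_or_pos i with rfl | hipos
          · rw [← coeff_zero_eq_constantCoeff_apply] at hg0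
            rw [hg0, zero_mul]
          · have : i ≠ 1 := fun hi => hne1 (by subst hi; simp at hij ⊢; omega)
            rw [hgm i (by omega) him, zero_mul]
        · have hineq : i ≠ m := fun hi => hne2 (by subst hi; simp at hij ⊢; omega)
          have hj : j < d := by omega
          rw [ih j (by omega), if_neg (show ¬(j = d) by omega),
            if_neg (show ¬(j + 1 = d + m) by omega), add_zero, mul_zero]
    · -- single surviving term (1, k-1)
      rw [Finset.sum_eq_single_of_mem (1, k - 1)
        (by rw [Finset.HasAntidiagonal.mem_antidiagonal]; simp; omega) ?_]
      · have h1 : coeff (k - 1) (g ^ d)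
            = (if k - 1 = d then 1 else 0)
              + (if k - 1 + 1 = d + m then (d : K) * coeff m g else 0) :=
          ih (k - 1) (by omega)
        rw [hg1, one_mul, h1]
        rw [if_neg (show ¬(k - 1 + 1 = d + m) by omega), add_zero,
          if_neg (show ¬(k + 1 = d + 1 + m) by omega), add_zero]
        by_cases hkd : k = d + 1
        · rw [if_pos (show k - 1 = d by omega), if_pos hkd]
        · rw [if_neg (show ¬(k - 1 = d) by omega), if_neg hkd]
      · rintro ⟨i, j⟩ hij hne
        rw [Finset.HasAntidiagonal.mem_antidiagonal] at hij
        simp only at hij ⊢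
        rcases Nat.lt_or_ge i m with him | him
        · rcases Nat.eq_zero_or_pos i with rfl | hipos
          · rw [← coeff_zero_eq_constantCoeff_apply] at hg0
            rw [hg0, zero_mul]
          · have : i ≠ 1 := fun hi => hne (by subst hi; simp at hij ⊢; omega)
            rw [hgm i (by omega) him, zero_mul]
        · have hj : j < d := by omega
          rw [ih j (by omega), if_neg (show ¬(j = d) by omega),
            if_neg (show ¬(j + 1 = d + m) by omega), add_zero, mul_zero]


/-- for `h = 1 + ∑_{i ≥ n} aᵢxⁱ ∈ H(K)` and `g = x + ∑_{j ≥ m} bⱼxʲ ∈ N(K)`,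
the product `(h ∘ g) · h⁻¹` lies in `H^{m+n-1}(K)` and its coefficient of `x^{m+n-1}`
is `n·aₙ·bₘ`. -/
theorem subst_mul_inv_mem (K : Type*) [CommRing K] (n m : ℕ) (hn : 1 ≤ n) (hm : 2 ≤ m)
    (h hinv g : PowerSeries K)
    (hh0 : constantCoeff h = 1)
    (hhn : ∀ i, 0 < i → i < n → coeff i h = 0)
    (hmul : h * hinv = 1)
    (hg0 : constantCoeff g = 0) (hg1 : coeff 1 g = 1)
    (hgm : ∀ j, 1 < j → j < m → coeff j g = 0) :
    constantCoeff (comp h g * hinv) = 1 ∧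
    (∀ k, 0 < k → k < m + n - 1 → coeff k (comp h g * hinv) = 0) ∧
    coeff (m + n - 1) (comp h g * hinv)
      = (n : K) * coeff n h * coeff m g := by

  have hne01 : m + n - 1 ≥ 2 := by omega
  -- coefficients of comp h g in low degrees
  have hcomp_lt : ∀ k, 0 < k → k < m + n - 1 → coeff k (comp h g) = coeff k h := by
    intro k hk0 hk
    rw [coeff_comp, Finset.sum_eq_single_of_mem k (Finset.self_mem_range_succ k) ?_]
    · rw [gpow_coeff m hm g hg0 hg1 hgm k k (by omega),
        if_pos rfl, if_neg (show ¬(k + 1 = k + m) by omega), add_zero, mul_one]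
    · intro d hd hdk
      rw [Finset.mem_range] at hd
      by_cases hdm : k < d + m
      · rw [gpow_coeff m hm g hg0 hg1 hgm d k hdm, if_neg (show ¬(k = d) by omega), zero_add]
        by_cases hc : k + 1 = d + m
        · rw [if_pos hc]
          rcases Nat.eq_zero_or_pos d with rfl | hdpos
          · simp
          · rw [hhn d hdpos (by omega), zero_mul]
        · rw [if_neg hc, mul_zero]
      · rcases Nat.eq_zero_or_pos d with rfl | hdpos
        · rw [pow_zero, PowerSeries.coeff_one, if_neg (by omega), mul_zero]
        · rw [hhn d hdpos (by omega), zero_mul]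
  -- coefficient of comp h g in degree m+n-1
  have hcomp_top : coeff (m + n - 1) (comp h g)
      = coeff (m + n - 1) h + (n : K) * coeff n h * coeff m g := by
    set k := m + n - 1 with hkdef
    rw [coeff_comp, Finset.sum_eq_add_of_mem k n (Finset.self_mem_range_succ k)
      (by rw [Finset.mem_range]; omega) (by omega) ?_]
    · rw [gpow_coeff m hm g hg0 hg1 hgm k k (by omega),
        if_pos rfl, if_neg (show ¬(k + 1 = k + m) by omega), add_zero, mul_one,
        gpow_coeff m hm g hg0 hg1 hgm n k (by omega),
        if_neg (show ¬(k = n) by omega), if_pos (show k + 1 = n + m by omega), zero_add]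
      ring
    · intro d hd hdn
      obtain ⟨hdk, hdn⟩ := hdn
      rw [Finset.mem_range] at hd
      by_cases hdm : k < d + m
      · rw [gpow_coeff m hm g hg0 hg1 hgm d k hdm, if_neg (show ¬(k = d) by omega),
          if_neg (show ¬(k + 1 = d + m) by omega), add_zero, mul_zero]
      · rcases Nat.eq_zero_or_pos d with rfl | hdpos
        · rw [pow_zero, PowerSeries.coeff_one, if_neg (by omega), mul_zero]
        · rw [hhn d hdpos (by omega), zero_mul]
  -- the difference D := comp h g - h vanishes below degree m+n-1
  have hD0 : ∀ i, i < m + n - 1 → coeff i (comp h g - h) = 0 := by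
    intro i hi
    rcases Nat.eq_zero_or_pos i with rfl | hipos
    · rw [map_sub, coeff_zero_eq_constantCoeff_apply, coeff_zero_eq_constantCoeff_apply,
        constantCoeff_comp, hh0, sub_self]
    · rw [map_sub, hcomp_lt i hipos hi, sub_self]
  have hDtop : coeff (m + n - 1) (comp h g - h) = (n : K) * coeff n h * coeff m g := by
    rw [map_sub, hcomp_top]; ring
  have hinv0 : constantCoeff hinv = 1 := by
    have := congrArg (constantCoeff) hmul
    rw [map_mul, hh0, one_mul, map_one] at this
    exact this
  have hsplit : comp h g * hinv = (comp h g - h) * hinv + 1 := by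
    rw [sub_mul, hmul]; ring
  refine ⟨?_, ?_, ?_⟩
  · rw [hsplit, map_add, map_one, map_mul,
      ← coeff_zero_eq_constantCoeff_apply, hD0 0 (by omega)]
    simp
  · intro k hk0 hk
    rw [hsplit, map_add, PowerSeries.coeff_one, if_neg (by omega), add_zero,
      PowerSeries.coeff_mul]
    apply Finset.sum_eq_zero
    rintro ⟨i, j⟩ hij
    rw [Finset.HasAntidiagonal.mem_antidiagonal] at hij
    simp only at hij ⊢
    rw [hD0 i (by omega), zero_mul]
  · rw [hsplit, map_add, PowerSeries.coeff_one, if_neg (by omega), add_zero,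
      PowerSeries.coeff_mul,
      Finset.sum_eq_single_of_mem (m + n - 1, 0)
        (by rw [Finset.HasAntidiagonal.mem_antidiagonal]; simp) ?_]
    · simp only
      rw [← coeff_zero_eq_constantCoeff_apply] at hinv0
      rw [hDtop, hinv0, mul_one]
    · rintro ⟨i, j⟩ hij hne
      rw [Finset.HasAntidiagonal.mem_antidiagonal] at hij
      simp only at hij ⊢
      have : i < m + n - 1 := by
        rcases Nat.lt_or_ge i (m + n - 1) with hlt | hge
        · exact hlt
        · exfalso; apply hne
          have : i = m + n - 1 := by omega
          subst this; simp; omega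
      rw [hD0 i this, zero_mul]

end RiordanPaper
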